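/- For x ∈ S_n avoiding 132, site i is active with respect to 132 if and only if {x_1, ..., x_{i-1}} = {n-i+2, ..., n}; consequently, the set of active sites Act_1(x;132) equals {i : i-1 ∈ Act_2 ∩ [ind_x(n), n]} ∪ {1}, where Act_2 is the set of active sites of the permutation obtained by deleting n from x. -/

import Mathlib

/-- `isoOrd p q` : `q` is order-isomorphic to `p`. -/
def isoOrd (p q : List ℕ) : Bool :=
  (p.length == q.length) &&
    (List.range p.length).all fun i =>
      (List.range p.length).all fun j =>
        decide ((p.getD i 0 < p.getD j 0) ↔ (q.getD i 0 < q.getD j 0))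

/-- `containsPat p w` : the word `w` contains an occurrence of the classical pattern `p`. -/
def containsPat (p w : List ℕ) : Bool :=
  (w.sublistsLen p.length).any (isoOrd p)

/-- Pop phase of the right-greedy `T`-avoiding stack: with next input `a`,
pop entries from the top of the stack while pushing `a` would create a pattern of `T`
(read from top to bottom).  Returns the remaining stack and the popped entries in output order. -/
def popPhase (T : List (List ℕ)) (a : ℕ) : List ℕ → List ℕ × List ℕ
  | [] => ([], [])
  | b :: s =>
    if T.any (fun p => containsPat p (a :: b :: s)) then
      let r := popPhase T a s
      (r.1, b :: r.2)
    else (b :: s, [])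

/-- Main loop of the right-greedy `T`-avoiding stack map. -/
def stkAux (T : List (List ℕ)) : List ℕ → List ℕ → List ℕ → List ℕ
  | [], stack, out => out ++ stack
  | a :: rest, stack, out =>
    let r := popPhase T a stack
    stkAux T rest (a :: r.1) (out ++ r.2)

/-- The generalized stack-sorting map `s_T` : the input is pushed right-greedily through a
stack which must avoid (read from top to bottom) every pattern in `T`. -/
def sT (T : List (List ℕ)) (x : List ℕ) : List ℕ := stkAux T x [] []

/-- West's stack-sorting map: the stack must be increasing from top to bottom,
i.e. must avoid `21` read from top to bottom. -/
def westSort (x : List ℕ) : List ℕ := sT [[2,1]] x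

/-- `x` is a permutation of `{1,…,n}`, written as a list. -/
def IsPermList (n : ℕ) (x : List ℕ) : Prop := x.Perm (List.range' 1 n)

/-- The identity permutation `1 2 … n`. -/
def idPerm (n : ℕ) : List ℕ := List.range' 1 n

/-- `x` contains the bivincular pattern `132*` : positions `i < j` (0-based) with
`x i < x (j+1)` and `x j = x (j+1) + 1`. -/
def Has132Star (x : List ℕ) : Prop :=
  ∃ i j, i < j ∧ j + 1 < x.length ∧ x.getD i 0 < x.getD (j+1) 0 ∧
    x.getD j 0 = x.getD (j+1) 0 + 1

/-- `x` contains the bivincular pattern `123*` : positions `i < j` (0-based) with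
`x i < x j` and `x (j+1) = x j + 1`. -/
def Has123Star (x : List ℕ) : Prop :=
  ∃ i j, i < j ∧ j + 1 < x.length ∧ x.getD i 0 < x.getD j 0 ∧
    x.getD (j+1) 0 = x.getD j 0 + 1

/-- Boolean version of `Has132Star`. -/
def has132star (x : List ℕ) : Bool :=
  (List.range x.length).any fun j =>
    decide (j + 1 < x.length) && (x.getD j 0 == x.getD (j+1) 0 + 1) &&
      (List.range j).any fun i => decide (x.getD i 0 < x.getD (j+1) 0)

/-- Boolean version of `Has123Star`. -/
def has123star (x : List ℕ) : Bool :=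
  (List.range x.length).any fun j =>
    decide (j + 1 < x.length) && (x.getD (j+1) 0 == x.getD j 0 + 1) &&
      (List.range j).any fun i => decide (x.getD i 0 < x.getD j 0)

/-- The set of active sites (1-based) of `w` with respect to `132`. -/
def activeSites132 (w : List ℕ) : Set ℕ :=
  {j | 1 ≤ j ∧ j ≤ w.length + 1 ∧
    containsPat [1,3,2] (w.insertIdx (j-1) (w.length + 1)) = false}

def Pat132 (w : List ℕ) : Prop := ∃ p q r, p < q ∧ q < r ∧ r < w.length ∧
  w.getD p 0 < w.getD r 0 ∧ w.getD r 0 < w.getD q 0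

lemma isoOrd_132 (a b c : ℕ) : isoOrd [1,3,2] [a,b,c] = true ↔ a < c ∧ c < b := by
  have h3 : List.range 3 = [0,1,2] := by decide
  simp [isoOrd, h3]
  omega

lemma pair_sublist {w : List ℕ} {q r : ℕ} (hqr : q < r) (hr : r < w.length) :
    List.Sublist [w[q], w[r]] w := by
  have h1 : List.Sublist [w[q], w[r]] (w.drop q) := by
    rw [List.drop_eq_getElem_cons (by omega)]
    apply List.Sublist.cons₂
    rw [List.singleton_sublist]
    have hlt : r - (q+1) < (w.drop (q+1)).length := by
      rw [List.length_drop]; omega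
    have he : (w.drop (q+1))[r - (q+1)] = w[r] := by
      rw [List.getElem_drop]; congr 1; omega
    rw [← he]; exact List.getElem_mem _
  exact h1.trans (List.drop_sublist _ _)

lemma triple_sublist {w : List ℕ} {p q r : ℕ} (hpq : p < q) (hqr : q < r) (hr : r < w.length) :
    List.Sublist [w[p], w[q], w[r]] w := by
  have h2 : List.Sublist [w[q], w[r]] (w.drop (p+1)) := by
    have hq' : q - (p+1) < (w.drop (p+1)).length := by rw [List.length_drop]; omega
    have hr' : r - (p+1) < (w.drop (p+1)).length := by rw [List.length_drop]; omega
    have e1 : (w.drop (p+1))[q - (p+1)] = w[q] := by rw [List.getElem_drop]; congr 1; omega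
    have e2 : (w.drop (p+1))[r - (p+1)] = w[r] := by rw [List.getElem_drop]; congr 1; omega
    rw [← e1, ← e2]
    exact pair_sublist (by omega) hr'
  have h1 : List.Sublist [w[p]] (w.take (p+1)) := by
    rw [List.singleton_sublist]
    have hp' : p < (w.take (p+1)).length := by rw [List.length_take]; omega
    have he : (w.take (p+1))[p] = w[p] := List.getElem_take
    rw [← he]; exact List.getElem_mem _
  have := List.Sublist.append h1 h2
  rwa [List.take_append_drop] at this

lemma containsPat132_iff (w : List ℕ) : containsPat [1,3,2] w = true ↔ Pat132 w := by
  rw [containsPat, List.any_eq_true]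
  constructor
  · rintro ⟨l, hl, hiso⟩
    rw [List.mem_sublistsLen] at hl
    obtain ⟨hsub, hlen⟩ := hl
    obtain ⟨a, b, c, rfl⟩ := List.length_eq_three.mp hlen
    rw [isoOrd_132] at hiso
    rw [List.sublist_iff_exists_orderEmbedding_getElem?_eq] at hsub
    obtain ⟨f, hf⟩ := hsub
    have h0 : w[f 0]? = some a := by simpa using (hf 0).symm
    have h1 : w[f 1]? = some b := by simpa using (hf 1).symm
    have h2 : w[f 2]? = some c := by simpa using (hf 2).symm
    rw [List.getElem?_eq_some_iff] at h0 h1 h2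
    obtain ⟨hl0, he0⟩ := h0
    obtain ⟨hl1, he1⟩ := h1
    obtain ⟨hl2, he2⟩ := h2
    refine ⟨f 0, f 1, f 2, f.strictMono (by norm_num), f.strictMono (by norm_num), hl2, ?_, ?_⟩
    · rw [List.getD_eq_getElem _ _ hl0, List.getD_eq_getElem _ _ hl2, he0, he2]; exact hiso.1
    · rw [List.getD_eq_getElem _ _ hl2, List.getD_eq_getElem _ _ hl1, he2, he1]; exact hiso.2
  · rintro ⟨p, q, r, hpq, hqr, hr, h1, h2⟩
    refine ⟨[w[p], w[q], w[r]], ?_, ?_⟩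
    · rw [List.mem_sublistsLen]
      exact ⟨triple_sublist hpq hqr hr, rfl⟩
    · rw [isoOrd_132]
      rw [List.getD_eq_getElem _ _ (by omega : p < w.length),
          List.getD_eq_getElem _ _ hr] at h1
      rw [List.getD_eq_getElem _ _ hr, List.getD_eq_getElem _ _ (by omega : q < w.length)] at h2
      exact ⟨h1, h2⟩

lemma avoid_iff (w : List ℕ) : containsPat [1,3,2] w = false ↔ ¬ Pat132 w := by
  rw [← containsPat132_iff]
  simp

section helpers
variable {x : List ℕ} {n : ℕ}

lemma perm_length (hx : IsPermList n x) : x.length = n := by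
  simpa using hx.length_eq

lemma perm_nodup (hx : IsPermList n x) : x.Nodup :=
  hx.nodup_iff.mpr (List.nodup_range')

lemma perm_mem_bounds (hx : IsPermList n x) {a : ℕ} (ha : a ∈ x) : 1 ≤ a ∧ a ≤ n := by
  have := hx.mem_iff.mp ha
  rw [List.mem_range'_1] at this
  omega

lemma perm_mem_of_bounds (hx : IsPermList n x) {a : ℕ} (h1 : 1 ≤ a) (h2 : a ≤ n) : a ∈ x := by
  rw [hx.mem_iff, List.mem_range'_1]; omega

end helpers

lemma mem_take_iff {a : ℕ} : ∀ (l : List ℕ) (k : ℕ), a ∈ l →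
    (a ∈ l.take k ↔ l.idxOf a < k) := by
  intro l
  induction l with
  | nil => intro k h; simp at h
  | cons b t ih =>
    intro k h
    cases k with
    | zero => simp
    | succ k' =>
      by_cases hb : a = b
      · subst hb
        simp [List.idxOf_cons_self]
      · have ht : a ∈ t := by
          rcases List.mem_cons.mp h with h' | h'
          · exact absurd h' hb
          · exact h'
        rw [List.take_succ_cons, List.idxOf_cons_ne _ (Ne.symm hb)]
        rw [List.mem_cons]
        constructor
        · rintro (h' | h')
          · exact absurd h' hb
          · have := (ih k' ht).mp h'; omega
        · intro h'
          exact Or.inr ((ih k' ht).mpr (by omega))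

lemma take_erase (a : ℕ) : ∀ (l : List ℕ) (k : ℕ), l.idxOf a ≤ k →
    (l.erase a).take k = (l.take (k+1)).erase a := by
  intro l
  induction l with
  | nil => intro k _; simp
  | cons b t ih =>
    intro k hk
    by_cases hb : b = a
    · subst hb
      rw [List.erase_cons_head, List.take_succ_cons, List.erase_cons_head]
    · rw [List.idxOf_cons_ne _ hb] at hk
      have hk1 : 1 ≤ k := by omega
      obtain ⟨k', rfl⟩ : ∃ k', k = k' + 1 := ⟨k - 1, by omega⟩
      rw [List.erase_cons_tail (by simpa using hb), List.take_succ_cons,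
        List.take_succ_cons, List.erase_cons_tail (by simpa using hb),
        ih k' (by omega)]

lemma insert_avoids_iff {n : ℕ} {x : List ℕ} (hx : IsPermList n x)
    (h132 : ¬ Pat132 x) {i : ℕ} (h1 : 1 ≤ i) (h2 : i ≤ n + 1) :
    (¬ Pat132 (x.insertIdx (i-1) (n+1))) ↔
      (x.take (i-1)).toFinset = Finset.Icc (n+2-i) n := by
  have hlen : x.length = n := perm_length hx
  have hnodup : x.Nodup := perm_nodup hx
  set pos := i - 1 with hposdef
  have hpos : pos ≤ n := by omega
  set y := x.insertIdx pos (n+1) with hy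
  have hylen : y.length = n + 1 := by
    rw [hy, List.length_insertIdx_of_le_length (by omega : pos ≤ x.length), hlen]
  -- getD facts
  have hylt : ∀ k, k < pos → y.getD k 0 = x.getD k 0 := by
    intro k hk
    rw [List.getD_eq_getElem _ _ (by omega : k < y.length),
      List.getD_eq_getElem _ _ (by omega : k < x.length)]
    exact List.getElem_insertIdx_of_lt hk (by rw [← hy]; omega)
  have hyeq : y.getD pos 0 = n + 1 := by
    rw [List.getD_eq_getElem _ _ (by omega : pos < y.length)]
    exact List.getElem_insertIdx_self (by rw [← hy]; omega)
  have hygt : ∀ k, pos < k → k < n + 1 → y.getD k 0 = x.getD (k-1) 0 := by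
    intro k hk1 hk2
    have h3 : pos + (k - 1 - pos) < x.length := by omega
    have hgd : y.getD (pos + (k - 1 - pos) + 1) 0 = x.getD (pos + (k - 1 - pos)) 0 := by
      rw [List.getD_eq_getElem _ _ (by omega : pos + (k - 1 - pos) + 1 < y.length),
        List.getD_eq_getElem _ _ h3]
      exact List.getElem_insertIdx_add_succ x (n+1) pos (k - 1 - pos) h3
    have e1 : pos + (k - 1 - pos) + 1 = k := by omega
    have e2 : pos + (k - 1 - pos) = k - 1 := by omega
    rw [e1, e2] at hgd
    exact hgd
  have hxb : ∀ k, k < n → 1 ≤ x.getD k 0 ∧ x.getD k 0 ≤ n := by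
    intro k hk
    rw [List.getD_eq_getElem _ _ (by omega : k < x.length)]
    exact perm_mem_bounds hx (List.getElem_mem _)
  have hinj : ∀ p q, p < n → q < n → x.getD p 0 = x.getD q 0 → p = q := by
    intro p q hp hq he
    rw [List.getD_eq_getElem _ _ (by omega : p < x.length),
      List.getD_eq_getElem _ _ (by omega : q < x.length)] at he
    exact hnodup.getElem_inj_iff.mp he
  have hmem_take : ∀ p, p < pos → x.getD p 0 ∈ (x.take pos).toFinset := by
    intro p hp
    rw [List.mem_toFinset, List.getD_eq_getElem _ _ (by omega : p < x.length)]
    have hp' : p < (x.take pos).length := by rw [List.length_take]; omega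
    have : (x.take pos)[p] = x[p] := List.getElem_take
    rw [← this]
    exact List.getElem_mem _
  have htake_mem : ∀ v, v ∈ (x.take pos).toFinset → ∃ p, p < pos ∧ x.getD p 0 = v := by
    intro v hv
    rw [List.mem_toFinset, List.mem_iff_getElem] at hv
    obtain ⟨p, hp, hpv⟩ := hv
    have hp' : p < pos := by
      rw [List.length_take] at hp; omega
    refine ⟨p, hp', ?_⟩
    rw [List.getD_eq_getElem _ _ (by omega : p < x.length)]
    rw [← hpv, List.getElem_take]
  constructor
  · intro hyav
    have dom : ∀ p q, p < pos → pos ≤ q → q < n → x.getD q 0 < x.getD p 0 := by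
      intro p q hp hq hqn
      by_contra hcon
      push_neg at hcon
      have hne : x.getD p 0 ≠ x.getD q 0 := fun he => by
        have := hinj p q (by omega) hqn he; omega
      apply hyav
      refine ⟨p, pos, q+1, by omega, by omega, by rw [hylen]; omega, ?_, ?_⟩
      · rw [hylt p hp, hygt (q+1) (by omega) (by omega)]
        simp only [Nat.add_sub_cancel]
        omega
      · rw [hygt (q+1) (by omega) (by omega), hyeq]
        simp only [Nat.add_sub_cancel]
        have := hxb q hqn
        omega
    have hnd : (x.take pos).Nodup := hnodup.sublist (List.take_sublist _ _)
    have hcard : (x.take pos).toFinset.card = pos := by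
      rw [List.toFinset_card_of_nodup hnd, List.length_take, hlen]
      omega
    have hsub : Finset.Icc (n+2-i) n ⊆ (x.take pos).toFinset := by
      intro v hv
      rw [Finset.mem_Icc] at hv
      have hvx : v ∈ x := perm_mem_of_bounds hx (by omega) hv.2
      obtain ⟨q, hq, hxq⟩ := List.mem_iff_getElem.mp hvx
      rw [hlen] at hq
      have hxq' : x.getD q 0 = v := by
        rw [List.getD_eq_getElem _ _ (by omega : q < x.length)]; exact hxq
      by_cases hqp : q < pos
      · rw [← hxq']; exact hmem_take q hqp
      · exfalso
        have hss : (x.take pos).toFinset ⊆ Finset.Icc (v+1) n := by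
          intro s hs
          obtain ⟨p, hp, hps⟩ := htake_mem s hs
          rw [Finset.mem_Icc]
          have h1 := dom p q hp (by omega) hq
          have h2 := hxb p (by omega)
          omega
        have hcle := Finset.card_le_card hss
        rw [hcard, Nat.card_Icc] at hcle
        omega
    have hcard2 : (Finset.Icc (n+2-i) n).card = pos := by
      rw [Nat.card_Icc]; omega
    exact (Finset.eq_of_subset_of_card_le hsub (by rw [hcard, hcard2])).symm
  · intro hS
    rintro ⟨p, q, r, hpq, hqr, hr, hv1, hv2⟩
    rw [hylen] at hr
    have hpre : ∀ p', p' < pos → n + 2 - i ≤ x.getD p' 0 := by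
      intro p' hp'
      have := hmem_take p' hp'
      rw [hS, Finset.mem_Icc] at this
      omega
    have hsuf : ∀ q', pos ≤ q' → q' < n → x.getD q' 0 < n + 2 - i := by
      intro q' hq1 hq2
      by_contra hcon
      push_neg at hcon
      have hmem : x.getD q' 0 ∈ (x.take pos).toFinset := by
        rw [hS, Finset.mem_Icc]
        exact ⟨hcon, (hxb q' hq2).2⟩
      obtain ⟨p', hp', hpe⟩ := htake_mem _ hmem
      have := hinj p' q' (by omega) hq2 hpe
      omega
    by_cases hqpos : q = pos
    · subst hqpos
      have hp' : p < pos := by omega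
      have hr1 : x.getD (r-1) 0 < n + 2 - i := hsuf (r-1) (by omega) (by omega)
      have hp1 : n + 2 - i ≤ x.getD p 0 := hpre p hp'
      rw [hylt p hp', hygt r (by omega) hr] at hv1
      omega
    by_cases hppos : p = pos
    · subst hppos
      rw [hyeq, hygt r (by omega) hr] at hv1
      have := hxb (r-1) (by omega)
      omega
    by_cases hrpos : r = pos
    · subst hrpos
      rw [hyeq] at hv2
      have hq' : q < pos := by omega
      rw [hylt q hq'] at hv2
      have := hxb q (by omega)
      omega
    · -- none equals pos
      apply h132
      have key : ∀ k, k < n + 1 → k ≠ pos →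
          y.getD k 0 = x.getD (if k < pos then k else k - 1) 0 ∧
          (if k < pos then k else k - 1) < n := by
        intro k hk hkne
        split_ifs with h
        · exact ⟨hylt k h, by omega⟩
        · exact ⟨hygt k (by omega) hk, by omega⟩
      obtain ⟨ep, bp⟩ := key p (by omega) hppos
      obtain ⟨eq', bq⟩ := key q (by omega) hqpos
      obtain ⟨er, br⟩ := key r hr hrpos
      refine ⟨(if p < pos then p else p - 1), (if q < pos then q else q - 1),
        (if r < pos then r else r - 1), ?_, ?_, by rw [hlen]; exact br, ?_, ?_⟩
      · split_ifs <;> omega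
      · split_ifs <;> omega
      · rw [← ep, ← er]; exact hv1
      · rw [← er, ← eq']; exact hv2

lemma containsPat_sublist {p w w' : List ℕ} (h : List.Sublist w' w)
    (hw : containsPat p w = false) : containsPat p w' = false := by
  rw [containsPat, List.any_eq_false] at *
  intro l hl
  apply hw
  rw [List.mem_sublistsLen] at *
  exact ⟨hl.1.trans h, hl.2⟩

lemma erase_isPerm {n : ℕ} {x : List ℕ} (hn : 1 ≤ n) (hx : IsPermList n x) :
    IsPermList (n-1) (x.erase n) := by
  have hr : (List.range' 1 n).erase n = List.range' 1 (n-1) := by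
    have hsplit : List.range' 1 n = List.range' 1 (n-1) ++ [n] := by
      conv_lhs => rw [show n = (n-1)+1 by omega]
      rw [List.range'_concat]
      congr 1
      simp
      omega
    rw [hsplit, List.erase_append_right _ (by rw [List.mem_range'_1]; omega),
      List.erase_cons_head]
    simp
  have := hx.erase n
  rwa [hr] at this

lemma toFinset_erase' {l : List ℕ} (h : l.Nodup) (a : ℕ) :
    (l.erase a).toFinset = l.toFinset.erase a := by
  ext b
  simp only [List.mem_toFinset, h.mem_erase_iff, Finset.mem_erase]

theorem active_sites_132_char' (n : ℕ) (x : List ℕ) (hx : IsPermList n x)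
    (hn : 1 ≤ n) (h132 : containsPat [1,3,2] x = false) :
    (∀ i, 1 ≤ i → i ≤ n + 1 →
        (containsPat [1,3,2] (x.insertIdx (i-1) (n+1)) = false ↔
          (x.take (i-1)).toFinset = Finset.Icc (n + 2 - i) n)) ∧
    activeSites132 x =
      {i | 1 ≤ i ∧ (i - 1) ∈ activeSites132 (x.erase n) ∧
        x.idxOf n + 1 ≤ i - 1 ∧ i - 1 ≤ n} ∪ {1} := by
  have hlen : x.length = n := perm_length hx
  have hnodup : x.Nodup := perm_nodup hx
  have h132' : ¬ Pat132 x := (avoid_iff x).mp h132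
  have char1 : ∀ i, 1 ≤ i → i ≤ n + 1 →
      (containsPat [1,3,2] (x.insertIdx (i-1) (n+1)) = false ↔
        (x.take (i-1)).toFinset = Finset.Icc (n + 2 - i) n) :=
    fun i hi1 hi2 => (avoid_iff _).trans (insert_avoids_iff hx h132' hi1 hi2)
  refine ⟨char1, ?_⟩
  set x' := x.erase n with hx'def
  have hnx : n ∈ x := perm_mem_of_bounds hx hn le_rfl
  have hx'p : IsPermList (n-1) x' := erase_isPerm hn hx
  have hlen' : x'.length = n - 1 := perm_length hx'p
  have h132'' : ¬ Pat132 x' :=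
    (avoid_iff _).mp (containsPat_sublist (List.erase_sublist) h132)
  have char2 : ∀ j, 1 ≤ j → j ≤ (n-1) + 1 →
      (containsPat [1,3,2] (x'.insertIdx (j-1) ((n-1)+1)) = false ↔
        (x'.take (j-1)).toFinset = Finset.Icc ((n-1) + 2 - j) (n-1)) :=
    fun j h1 h2 => (avoid_iff _).trans (insert_avoids_iff hx'p h132'' h1 h2)
  ext i
  simp only [activeSites132, Set.mem_setOf_eq, Set.mem_union, Set.mem_singleton_iff,
    hlen, hlen']
  constructor
  · rintro ⟨hi1, hi2, hcp⟩
    by_cases hi : i = 1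
    · right; exact hi
    left
    have hi2' : 2 ≤ i := by omega
    have hset := (char1 i hi1 hi2).mp hcp
    have hnmem : n ∈ x.take (i-1) := by
      have : n ∈ (x.take (i-1)).toFinset := by
        rw [hset, Finset.mem_Icc]; omega
      simpa using this
    have hindlt : x.idxOf n < i - 1 := (mem_take_iff x (i-1) hnx).mp hnmem
    refine ⟨hi1, ⟨by omega, by omega, ?_⟩, by omega, by omega⟩
    rw [show i - 1 - 1 = (i-1) - 1 from rfl, char2 (i-1) (by omega) (by omega)]
    have ht : x'.take (i-1-1) = (x.take (i-1)).erase n := by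
      rw [hx'def]
      have := take_erase n x (i-2) (by omega)
      rw [show i-2+1 = i-1 by omega] at this
      rw [show i-1-1 = i-2 by omega]
      exact this
    have hnd : (x.take (i-1)).Nodup := hnodup.sublist (List.take_sublist _ _)
    rw [ht, toFinset_erase' hnd, hset, Finset.Icc_erase_right,
      show (n-1) + 2 - (i-1) = n + 2 - i by omega, ← Finset.Ico_add_one_right_eq_Icc,
      show n-1+1 = n by omega]
  · rintro (⟨hi1, ⟨hj1, hj2, hcp⟩, hind1, hind2⟩ | rfl)
    · have hi2' : 2 ≤ i := by omega
      refine ⟨hi1, by omega, ?_⟩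
      rw [char1 i hi1 (by omega)]
      have hset' := (char2 (i-1) hj1 (by omega)).mp hcp
      have hindlt : x.idxOf n < i - 1 := by omega
      have hmemtake : n ∈ x.take (i-1) := (mem_take_iff x (i-1) hnx).mpr hindlt
      have hnd : (x.take (i-1)).Nodup := hnodup.sublist (List.take_sublist _ _)
      have ht : x'.take (i-1-1) = (x.take (i-1)).erase n := by
        rw [hx'def]
        have := take_erase n x (i-2) (by omega)
        rw [show i-2+1 = i-1 by omega] at this
        rw [show i-1-1 = i-2 by omega]
        exact this
      have step : (x.take (i-1)).toFinset = insert n ((x.take (i-1)).toFinset.erase n) :=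
        (Finset.insert_erase (by simpa using hmemtake)).symm
      rw [step, ← toFinset_erase' hnd, ← ht, hset',
        show (n-1) + 2 - (i-1) = n + 2 - i by omega, ← Finset.Ico_add_one_right_eq_Icc,
        show n-1+1 = n by omega]
      exact Finset.Ico_insert_right (by omega)
    · refine ⟨le_rfl, by omega, ?_⟩
      rw [char1 1 le_rfl (by omega)]
      simp only [Nat.sub_self, List.take_zero, List.toFinset_nil]
      rw [Finset.Icc_eq_empty (by omega)]

/-- For `x ∈ Av_n(132)` : site `i` is active with respect to `132` iff
`{x₁, …, x_{i-1}} = {n-i+2, …, n}` ; consequently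
`Act₁(x;132) = {i : i - 1 ∈ Act₂(x;132) ∩ [ind_x(n), n]} ∪ {1}`,
where `Act₂` is the set of active sites of the permutation obtained by deleting `n`. -/
theorem active_sites_132_char (n : ℕ) (x : List ℕ) (hx : IsPermList n x)
    (hn : 1 ≤ n) (h132 : containsPat [1,3,2] x = false) :
    (∀ i, 1 ≤ i → i ≤ n + 1 →
        (containsPat [1,3,2] (x.insertIdx (i-1) (n+1)) = false ↔
          (x.take (i-1)).toFinset = Finset.Icc (n + 2 - i) n)) ∧
    activeSites132 x =
      {i | 1 ≤ i ∧ (i - 1) ∈ activeSites132 (x.erase n) ∧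
        x.idxOf n + 1 ≤ i - 1 ∧ i - 1 ≤ n} ∪ {1} := active_sites_132_char' n x hx hn h132
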